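/- Fix u ≥ 1 and x with −u < x < 0. There exists ε > 0 such that for every real p with 0 < |p| < ε and every y > 1 satisfying (u+x)^p − (u−x)^p = (y−1)^p − (y+1)^p, one has y < 2·(−u/x) + 3; in other words, all such bisector points on the vertical line at x lie in the open interval (1, 2·h(x)+3) where h(x) = −u/x. -/

import Mathlib

open Real Set Filter Topology

private lemma stmt13_hasDerivF (p : ℝ) {t : ℝ} (ht : 1 < t) :
    HasDerivAt (fun t : ℝ => (t - 1) ^ p - (t + 1) ^ p)
      (p * (t - 1) ^ (p - 1) - p * (t + 1) ^ (p - 1)) t := by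
  have h1 : HasDerivAt (fun t : ℝ => (t - 1) ^ p) (p * (t - 1) ^ (p - 1)) t := by
    have h := ((Real.hasStrictDerivAt_rpow_const_of_ne
      (show t - 1 ≠ 0 by linarith) p).hasDerivAt).comp t ((hasDerivAt_id t).sub_const 1)
    simpa [Function.comp_def] using h
  have h2 : HasDerivAt (fun t : ℝ => (t + 1) ^ p) (p * (t + 1) ^ (p - 1)) t := by
    have h := ((Real.hasStrictDerivAt_rpow_const_of_ne
      (show t + 1 ≠ 0 by linarith) p).hasDerivAt).comp t ((hasDerivAt_id t).add_const 1)
    simpa [Function.comp_def] using h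
  exact h1.sub h2

private lemma stmt13_mono_pos {p : ℝ} (hp0 : 0 < p) (hp1 : p < 1) :
    StrictMonoOn (fun t : ℝ => (t - 1) ^ p - (t + 1) ^ p) (Set.Ioi 1) := by
  apply strictMonoOn_of_deriv_pos (convex_Ioi 1)
  · exact fun t ht => ((stmt13_hasDerivF p ht).continuousAt).continuousWithinAt
  · intro t ht
    rw [interior_Ioi] at ht
    rw [(stmt13_hasDerivF p ht).deriv]
    have hlt : (t + 1) ^ (p - 1) < (t - 1) ^ (p - 1) :=
      Real.rpow_lt_rpow_of_neg (by simp only [Set.mem_Ioi] at ht; linarith)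
        (by linarith) (by linarith)
    nlinarith

private lemma stmt13_mono_neg {p : ℝ} (hp : p < 0) :
    StrictAntiOn (fun t : ℝ => (t - 1) ^ p - (t + 1) ^ p) (Set.Ioi 1) := by
  apply strictAntiOn_of_deriv_neg (convex_Ioi 1)
  · exact fun t ht => ((stmt13_hasDerivF p ht).continuousAt).continuousWithinAt
  · intro t ht
    rw [interior_Ioi] at ht
    rw [(stmt13_hasDerivF p ht).deriv]
    have hlt : (t + 1) ^ (p - 1) < (t - 1) ^ (p - 1) :=
      Real.rpow_lt_rpow_of_neg (by simp only [Set.mem_Ioi] at ht; linarith)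
        (by linarith) (by linarith)
    nlinarith

private lemma stmt13_deriv_zero {x : ℝ} (hx : 0 < x) :
    HasDerivAt (fun p : ℝ => x ^ p) (Real.log x) 0 := by
  simpa using (Real.hasStrictDerivAt_const_rpow hx 0).hasDerivAt

/-- in cell H₂ (`−u < x < 0`, `y > 1`), for all `p` close enough to `0`
every bisector point on the vertical line at `x` satisfies `y < 2·h(x) + 3`, where
`h(x) = −u/x`. -/
theorem stmt13 (u x : ℝ) (hu : 1 ≤ u) (hx1 : -u < x) (hx2 : x < 0) :
    ∃ ε > (0:ℝ), ∀ p : ℝ, 0 < |p| → |p| < ε → ∀ y : ℝ, 1 < y →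
      (u + x) ^ p - (u - x) ^ p = (y - 1) ^ p - (y + 1) ^ p →
      y < 2 * (-u / x) + 3 := by
  set a : ℝ := u + x with ha_def
  set b : ℝ := u - x with hb_def
  have ha : 0 < a := by simp [ha_def]; linarith
  have hb : 0 < b := by simp [hb_def]; linarith
  have hab : a < b := by simp [ha_def, hb_def]; linarith
  have hh : 0 < -u / x := div_pos_of_neg_of_neg (by linarith) hx2
  set Y : ℝ := 2 * (-u / x) + 3 with hY_def
  have hY : 1 < Y := by simp only [hY_def]; linarith
  set c : ℝ := Y - 1 with hc_def
  set d : ℝ := Y + 1 with hd_def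
  have hc : 0 < c := by simp only [hc_def]; linarith
  have hd : 0 < d := by simp only [hd_def]; linarith
  have hxh : x * (-u / x) = -u := by
    rw [neg_div, mul_neg, mul_div_cancel₀ _ (ne_of_lt hx2)]
  have key : a * d < b * c := by
    simp only [ha_def, hb_def, hc_def, hd_def, hY_def]
    nlinarith [hxh]
  set L : ℝ := (Real.log c - Real.log d) - (Real.log a - Real.log b) with hL_def
  have hL : 0 < L := by
    have h1 : Real.log (a * d) < Real.log (b * c) :=
      Real.log_lt_log (by positivity) key
    rw [Real.log_mul (ne_of_gt ha) (ne_of_gt hd),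
        Real.log_mul (ne_of_gt hb) (ne_of_gt hc)] at h1
    simp only [hL_def]; linarith
  set g : ℝ → ℝ := fun p => (c ^ p - d ^ p) - (a ^ p - b ^ p) with hg_def
  have hg : HasDerivAt g L 0 := by
    have := ((stmt13_deriv_zero hc).sub (stmt13_deriv_zero hd)).sub
      ((stmt13_deriv_zero ha).sub (stmt13_deriv_zero hb))
    simpa [hg_def, hL_def, Pi.sub_def] using this
  rw [hasDerivAt_iff_tendsto_slope] at hg
  have hpos : ∀ᶠ p in 𝓝[≠] (0:ℝ), 0 < slope g 0 p := hg.eventually (eventually_gt_nhds hL)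
  rw [eventually_iff, Metric.mem_nhdsWithin_iff] at hpos
  obtain ⟨ε, hε, hspec⟩ := hpos
  refine ⟨min ε 1, by positivity, ?_⟩
  intro p hp0 hpe y hy heq
  by_contra hcon
  push_neg at hcon
  have hpne : p ≠ 0 := by simpa [abs_pos] using hp0
  have hdist : dist p 0 < ε := by
    rw [Real.dist_eq, sub_zero]
    exact lt_of_lt_of_le hpe (min_le_left _ _)
  have hslope : 0 < slope g 0 p := hspec ⟨Metric.mem_ball.mpr hdist, hpne⟩
  have hg0 : g 0 = 0 := by simp [hg_def]
  have hgp : 0 < g p / p := by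
    have : slope g 0 p = g p / p := by
      simp [slope_def_field, hg0]
    rwa [this] at hslope
  have hYmem : Y ∈ Set.Ioi (1:ℝ) := hY
  have hymem : y ∈ Set.Ioi (1:ℝ) := hy
  rcases hpne.lt_or_gt with hpneg | hppos
  · -- p < 0 : g p < 0, but antitonicity gives g p ≥ 0
    have hgplt : g p < 0 := by
      rcases div_pos_iff.mp hgp with ⟨h1, h2⟩ | ⟨h1, h2⟩
      · linarith
      · exact h1
    have hmono := (stmt13_mono_neg hpneg).antitoneOn hYmem hymem hcon
    rw [← heq] at hmono
    simp only [hg_def] at hgplt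
    simp only [hc_def, hd_def] at hgplt
    linarith
  · -- p > 0 : g p > 0, but monotonicity gives g p ≤ 0
    have hp1 : p < 1 := by
      have := lt_of_lt_of_le hpe (min_le_right _ _)
      rw [abs_lt] at this
      exact this.2
    have hgpgt : 0 < g p := by
      rcases div_pos_iff.mp hgp with ⟨h1, h2⟩ | ⟨h1, h2⟩
      · exact h1
      · linarith
    have hmono := (stmt13_mono_pos hppos hp1).monotoneOn hYmem hymem hcon
    rw [← heq] at hmono
    simp only [hg_def] at hgpgt
    simp only [hc_def, hd_def] at hgpgt
    linarith
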